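/- arXiv:2208.14723 — 5 statements merged into one kernel-verified Lean document; each statement's English description precedes it below -/
import Mathlib

section
/- If mode M₁ is derived from quasimode M̃₁ and mode M₂ is derived from quasimode M̃₂ (for Boolean P systems Π₁, Π₂ and their union Π = Π₁ ∪ Π₂), then the mode derived from the quasimode M̃₁ ⊍ M̃₂ equals the product mode M₁ × M₂; that is, for every configuration W, (M̃₁ ⊍ M̃₂) ∩ Appl(Π, W) = (M̃₁ ∩ Appl(Π, W)) ⊍ (M̃₂ ∩ Appl(Π, W)). -/
attribute [local instance] Classical.propDecidable

structure PRule (α : Type*) where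
  lhs : Set α
  rhs : Set α
  guard : Set α → Prop

def applicable {α : Type*} (r : PRule α) (W : Set α) : Prop :=
  r.lhs ⊆ W ∧ r.guard W

def applyRules {α : Type*} (S : Set (PRule α)) (W : Set α) : Set α :=
  (W \ ⋃ r ∈ S, r.lhs) ∪ ⋃ r ∈ S, r.rhs

def Appl {α : Type*} (R : Set (PRule α)) (W : Set α) : Set (Set (PRule α)) :=
  {S | S ⊆ R ∧ ∀ r ∈ S, applicable r W}

def uprod {α : Type*} (A B : Set (Set α)) : Set (Set α) :=
  {s | ∃ a ∈ A, ∃ b ∈ B, s = a ∪ b}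

theorem stmt3 {α : Type*} (R₁ R₂ : Set (PRule α))
    (M₁ M₂ : Set (Set (PRule α)))
    (hM₁ : ∀ S ∈ M₁, S ⊆ R₁) (hM₂ : ∀ S ∈ M₂, S ⊆ R₂)
    (W : Set α) :
    uprod M₁ M₂ ∩ Appl (R₁ ∪ R₂) W
      = uprod (M₁ ∩ Appl (R₁ ∪ R₂) W) (M₂ ∩ Appl (R₁ ∪ R₂) W) := by
  ext s
  constructor
  · rintro ⟨⟨a, ha, b, hb, rfl⟩, hsub, happ⟩
    exact ⟨a, ⟨ha, (hM₁ a ha).trans Set.subset_union_left,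
        fun r hr => happ r (Or.inl hr)⟩,
      b, ⟨hb, (hM₂ b hb).trans Set.subset_union_right,
        fun r hr => happ r (Or.inr hr)⟩, rfl⟩
  · rintro ⟨a, ⟨ha, hsa, hra⟩, b, ⟨hb, hsb, hrb⟩, rfl⟩
    exact ⟨⟨a, ha, b, hb, rfl⟩, Set.union_subset hsa hsb,
      fun r hr => hr.elim (hra r) (hrb r)⟩
end

section
/- Let F : (X → Bool) → (X → Bool) be a Boolean network over a finite variable set X, and let Π(F) be the Boolean P system over alphabet X whose rules are, for each x ∈ X, the rules ∅ → {x} | f_x and {x} → ∅ | ¬f_x, where f_x(s) = F(s)(x). Then for any state s : X → Bool with corresponding set W = {x | s(x) = true} and any set of variables m ⊆ X updated synchronously, the set obtained by applying to W the set of rules ⋃_{x∈m} R_x restricted to its applicable members equals {x | s'(x) = true}, where s' is the state obtained from s by updating each x ∈ m to f_x(s) and leaving other variables unchanged. -/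
attribute [local instance] Classical.propDecidable

noncomputable def ind {X : Type*} (W : Set X) : X → Bool :=
  fun y => decide (y ∈ W)

noncomputable def insRule {X : Type*} (F : (X → Bool) → (X → Bool)) (x : X) : PRule X :=
  ⟨∅, {x}, fun W => F (ind W) x = true⟩

noncomputable def eraseRule {X : Type*} (F : (X → Bool) → (X → Bool)) (x : X) : PRule X :=
  ⟨{x}, ∅, fun W => ¬ (F (ind W) x = true)⟩

noncomputable def Rx {X : Type*} (F : (X → Bool) → (X → Bool)) (x : X) : Set (PRule X) :=
  {insRule F x, eraseRule F x}

lemma insRule_lhs {X : Type*} (F : (X → Bool) → (X → Bool)) (x : X) :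
    (insRule F x).lhs = ∅ := rfl
lemma insRule_rhs {X : Type*} (F : (X → Bool) → (X → Bool)) (x : X) :
    (insRule F x).rhs = {x} := rfl
lemma insRule_guard {X : Type*} (F : (X → Bool) → (X → Bool)) (x : X) (W : Set X) :
    (insRule F x).guard W ↔ F (ind W) x = true := Iff.rfl
lemma eraseRule_lhs {X : Type*} (F : (X → Bool) → (X → Bool)) (x : X) :
    (eraseRule F x).lhs = {x} := rfl
lemma eraseRule_rhs {X : Type*} (F : (X → Bool) → (X → Bool)) (x : X) :
    (eraseRule F x).rhs = ∅ := rfl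
lemma eraseRule_guard {X : Type*} (F : (X → Bool) → (X → Bool)) (x : X) (W : Set X) :
    (eraseRule F x).guard W ↔ ¬ F (ind W) x = true := Iff.rfl

lemma ind_state {X : Type*} (s : X → Bool) : ind {x | s x = true} = s := by
  funext y
  simp [ind]

theorem stmt5 {X : Type*} [Fintype X] (F : (X → Bool) → (X → Bool))
    (s : X → Bool) (m : Set X) :
    applyRules {r ∈ ⋃ x ∈ m, Rx F x | applicable r {x | s x = true}} {x | s x = true}
      = {x | (if x ∈ m then F s x else s x) = true} := by
  ext y
  simp only [applyRules, applicable, Set.mem_union,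
    Set.mem_diff, Set.mem_setOf_eq, Set.mem_iUnion, exists_prop, Set.sep_setOf]
  constructor
  · rintro (⟨hy, hn⟩ | ⟨r, ⟨⟨x, hx, hr⟩, happ⟩, hyr⟩)
    · by_cases hm : y ∈ m
      · simp only [hm, if_true]
        by_contra hF
        exact hn ⟨eraseRule F y, ⟨⟨⟨y, hm, Or.inr rfl⟩,
          ⟨by simpa [eraseRule_lhs] using hy, by simpa [eraseRule_guard, ind_state] using hF⟩⟩, by simp [eraseRule_lhs]⟩⟩
      · simpa [hm]
    · simp only [Rx, Set.mem_insert_iff, Set.mem_singleton_iff] at hr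
      rcases hr with hr | hr <;> subst hr
      · rw [insRule_rhs, Set.mem_singleton_iff] at hyr
        subst hyr
        simp only [hx, if_true]
        simpa [insRule_guard, ind_state] using happ.2
      · simp [eraseRule_rhs] at hyr
  · intro h
    by_cases hm : y ∈ m
    · simp only [hm, if_true] at h
      right
      exact ⟨insRule F y, ⟨⟨⟨y, hm, Or.inl rfl⟩, ⟨by simp [insRule_lhs], by simpa [insRule_guard, ind_state]⟩⟩, by simp [insRule_rhs]⟩⟩
    · simp only [hm, if_false] at h
      left
      refine ⟨h, ?_⟩
      rintro ⟨r, ⟨⟨⟨x, hx, hr⟩, happ⟩, hyr⟩⟩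
      simp only [Rx, Set.mem_insert_iff, Set.mem_singleton_iff] at hr
      rcases hr with hr | hr <;> subst hr
      · simp [insRule_lhs] at hyr
      · rw [eraseRule_lhs, Set.mem_singleton_iff] at hyr
        subst hyr
        exact hm hx
end

section
/- Theorem (simulation of Boolean networks by Boolean P systems): Let F be a Boolean network over finite X and M ⊆ 2^X a Boolean mode. Let Π(F) be the associated Boolean P system and M̃ = { ⋃_{x∈m} R_x | m ∈ M } the corresponding quasimode. Then for all W, W' ⊆ X: the P system Π(F) can derive W' from W in one step under the mode induced by M̃ if and only if the Boolean network F can derive the state s' (indicator of W') from the state s (indicator of W) in one step under mode M (i.e., there exists m ∈ M such that s'(x) = f_x(s) for x ∈ m and s'(x) = s(x) for x ∉ m). -/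
attribute [local instance] Classical.propDecidable

lemma key {X : Type*} (F : (X → Bool) → (X → Bool)) (m W : Set X) :
    applyRules {r ∈ ⋃ x ∈ m, Rx F x | applicable r W} W
      = {x | if x ∈ m then F (ind W) x = true else x ∈ W} := by
  ext x
  simp only [applyRules, Set.mem_union, Set.mem_diff, Set.mem_iUnion, Set.mem_setOf_eq,
    Rx, Set.mem_insert_iff, Set.mem_singleton_iff, applicable, insRule, eraseRule]
  constructor
  · rintro (⟨hxW, hL⟩ | ⟨r, ⟨⟨y, hy, hr⟩, _, hg⟩, hx⟩)
    · by_cases hm : x ∈ m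
      · by_cases hF : F (ind W) x = true
        · simp [hm, hF]
        · exact absurd ⟨eraseRule F x, ⟨⟨x, hm, Or.inr rfl⟩,
            fun z hz => by simpa [eraseRule] using hz ▸ hxW, hF⟩, rfl⟩ hL
      · simp [hm, hxW]
    · rcases hr with rfl | rfl
      · simp only [insRule] at hx hg
        rcases hx with rfl
        simp [hy, hg]
      · simp [eraseRule] at hx
  · intro hx
    by_cases hm : x ∈ m
    · simp only [hm, if_true] at hx
      right
      exact ⟨insRule F x, ⟨⟨x, hm, Or.inl rfl⟩, by simp [insRule, applicable], hx⟩, rfl⟩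
    · simp only [hm, if_false] at hx
      left
      refine ⟨hx, ?_⟩
      rintro ⟨r, ⟨⟨y, hy, hr⟩, hsub, hg⟩, hxl⟩
      rcases hr with rfl | rfl
      · simp [insRule] at hxl
      · simp only [eraseRule, Set.mem_singleton_iff] at hxl
        subst hxl; exact hm hy

theorem stmt8 {X : Type*} [Fintype X] (F : (X → Bool) → (X → Bool))
    (M : Set (Set X)) (W W' : Set X) :
    (∃ T ∈ {S | ∃ m ∈ M, S = ⋃ x ∈ m, Rx F x},
        W' = applyRules {r ∈ T | applicable r W} W)
      ↔ (∃ m ∈ M, W' = {x | (if x ∈ m then F (ind W) x = true else x ∈ W)}) := by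
  constructor
  · rintro ⟨T, ⟨m, hm, rfl⟩, hW'⟩
    exact ⟨m, hm, by rw [hW', key]⟩
  · rintro ⟨m, hm, rfl⟩
    exact ⟨⋃ x ∈ m, Rx F x, ⟨m, hm, rfl⟩, (key F m W).symm⟩
end

section
/- Any reaction a = (R_a, I_a, P_a) of a reaction system is simulated exactly by the Boolean P system rule ∅ → P_a | φ_a together with degradation rules: for every W ⊆ S, the result of applying to W all applicable rules among { ∅ → P_a | φ_a : a ∈ A } ∪ { {x} → ∅ | ⊤ : x ∈ S } equals res_A(W) = ⋃ { P_a | a ∈ A, R_a ⊆ W, I_a ∩ W = ∅ }, where φ_a(W) = (R_a ⊆ W ∧ I_a ∩ W = ∅). -/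
attribute [local instance] Classical.propDecidable

structure Reaction (σ : Type*) where
  Ra : Set σ
  Ia : Set σ
  Pa : Set σ

def enabled {σ : Type*} (a : Reaction σ) (W : Set σ) : Prop :=
  a.Ra ⊆ W ∧ a.Ia ∩ W = ∅

def res {σ : Type*} (A : Set (Reaction σ)) (W : Set σ) : Set σ :=
  ⋃ a ∈ {a ∈ A | enabled a W}, a.Pa

def reactionRule {σ : Type*} (a : Reaction σ) : PRule σ :=
  ⟨∅, a.Pa, fun W => a.Ra ⊆ W ∧ a.Ia ∩ W = ∅⟩

def degRule {σ : Type*} (x : σ) : PRule σ :=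
  ⟨{x}, ∅, fun _ => True⟩

theorem stmt9 {σ : Type*} (A : Set (Reaction σ)) (W : Set σ) :
    applyRules
      {r ∈ (reactionRule '' A) ∪ Set.range (degRule (σ := σ)) | applicable r W} W
      = res A W := by
  ext x
  simp only [applyRules, res, enabled, Set.mem_union, Set.mem_diff, Set.mem_iUnion,
    Set.mem_setOf_eq, applicable]
  constructor
  · rintro (⟨hxW, hn⟩ | ⟨r, ⟨hr, hlhs, hg⟩, hx⟩)
    · exact absurd ⟨degRule x, ⟨Or.inr ⟨x, rfl⟩,
        by simp [degRule, applicable, hxW]⟩, by simp [degRule]⟩ hn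
    · rcases hr with ⟨a, ha, rfl⟩ | ⟨y, rfl⟩
      · exact ⟨a, ⟨ha, hg⟩, hx⟩
      · simp [degRule] at hx
  · rintro ⟨a, ⟨ha, hen⟩, hx⟩
    exact Or.inr ⟨reactionRule a, ⟨⟨Or.inl ⟨a, ha, rfl⟩, by simp [reactionRule], hen⟩, hx⟩⟩
end

section
/- Suppose Π₁ = (V₁, R₁) and Π₂ = (V₂, R₂) are Boolean P systems with disjoint alphabets V₁ ∩ V₂ = ∅, and additionally each rule of Rᵢ mentions only symbols of Vᵢ (left-hand side, right-hand side, and the guard depends only on the restriction of the configuration to Vᵢ). Then for any one-step transition W → W' of Π₁ ∪ Π₂ under the product mode M₁ × M₂, the projections satisfy: W ∩ V₁ → W' ∩ V₁ is a one-step transition of Π₁ under M₁, and W ∩ V₂ → W' ∩ V₂ is a one-step transition of Π₂ under M₂. -/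
attribute [local instance] Classical.propDecidable

lemma proj_aux {α : Type*} (V₁ V₂ : Set α) (hV : V₁ ∩ V₂ = ∅)
    (S₁ S₂ : Set (PRule α))
    (h₁ : ∀ r ∈ S₁, r.rhs ⊆ V₁)
    (h₂ : ∀ r ∈ S₂, r.lhs ⊆ V₂ ∧ r.rhs ⊆ V₂)
    (W : Set α) :
    applyRules (S₁ ∪ S₂) W ∩ V₁ = applyRules S₁ (W ∩ V₁) := by
  have hdisj : ∀ x, x ∈ V₁ → x ∈ V₂ → False := by
    intro x hx1 hx2
    have : x ∈ V₁ ∩ V₂ := ⟨hx1, hx2⟩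
    rw [hV] at this; exact this
  ext x
  simp only [applyRules, Set.mem_inter_iff, Set.mem_union, Set.mem_diff,
    Set.mem_iUnion, exists_prop, not_exists, not_and, Set.mem_union] at *
  constructor
  · rintro ⟨h | ⟨r, hr, hrx⟩, hx1⟩
    · left
      exact ⟨⟨h.1, hx1⟩, fun r hr hrx => h.2 r (Or.inl hr) hrx⟩
    · rcases hr with hr | hr
      · right; exact ⟨r, hr, hrx⟩
      · exact absurd hx1 (fun hx1 => hdisj x hx1 ((h₂ r hr).2 hrx))
  · rintro (⟨⟨hxW, hx1⟩, h⟩ | ⟨r, hr, hrx⟩)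
    · refine ⟨Or.inl ⟨hxW, fun r hr hrx => ?_⟩, hx1⟩
      rcases hr with hr | hr
      · exact h r hr hrx
      · exact hdisj x hx1 ((h₂ r hr).1 hrx)
    · exact ⟨Or.inr ⟨r, Or.inl hr, hrx⟩, h₁ r hr hrx⟩

theorem stmt13 {α : Type*} (V₁ V₂ : Set α) (R₁ R₂ : Set (PRule α))
    (hV : V₁ ∩ V₂ = ∅)
    (hR₁ : ∀ r ∈ R₁, r.lhs ⊆ V₁ ∧ r.rhs ⊆ V₁ ∧ ∀ W : Set α, (r.guard W ↔ r.guard (W ∩ V₁)))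
    (hR₂ : ∀ r ∈ R₂, r.lhs ⊆ V₂ ∧ r.rhs ⊆ V₂ ∧ ∀ W : Set α, (r.guard W ↔ r.guard (W ∩ V₂)))
    (M₁ M₂ : Set α → Set (Set (PRule α)))
    (hM₁ : ∀ W : Set α, M₁ W ⊆ Appl R₁ W) (hM₂ : ∀ W : Set α, M₂ W ⊆ Appl R₂ W)
    (hM₁loc : ∀ W : Set α, M₁ W = M₁ (W ∩ V₁)) (hM₂loc : ∀ W : Set α, M₂ W = M₂ (W ∩ V₂))
    (W W' : Set α)
    (hstep : ∃ S ∈ uprod (M₁ W) (M₂ W), W' = applyRules S W) :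
    (∃ S₁ ∈ M₁ (W ∩ V₁), W' ∩ V₁ = applyRules S₁ (W ∩ V₁)) ∧
    (∃ S₂ ∈ M₂ (W ∩ V₂), W' ∩ V₂ = applyRules S₂ (W ∩ V₂)) := by
  obtain ⟨S, ⟨S₁, hS₁, S₂, hS₂, rfl⟩, rfl⟩ := hstep
  have hS₁R : S₁ ⊆ R₁ := (hM₁ W hS₁).1
  have hS₂R : S₂ ⊆ R₂ := (hM₂ W hS₂).1
  have hV' : V₂ ∩ V₁ = ∅ := by rw [Set.inter_comm]; exact hV
  constructor
  · refine ⟨S₁, by rwa [← hM₁loc], ?_⟩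
    exact proj_aux V₁ V₂ hV S₁ S₂ (fun r hr => (hR₁ r (hS₁R hr)).2.1)
      (fun r hr => ⟨(hR₂ r (hS₂R hr)).1, (hR₂ r (hS₂R hr)).2.1⟩) W
  · refine ⟨S₂, by rwa [← hM₂loc], ?_⟩
    rw [Set.union_comm S₁ S₂] 
    exact proj_aux V₂ V₁ hV' S₂ S₁ (fun r hr => (hR₂ r (hS₂R hr)).2.1)
      (fun r hr => ⟨(hR₁ r (hS₁R hr)).1, (hR₁ r (hS₁R hr)).2.1⟩) W
end
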